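/- Let s < −1, β, η > 0, T > 0, and let S(t) denote the semigroup with Fourier symbol e^{(iβk|k| − η(k²−|k|))t} on periodic Sobolev spaces. Then the bilinear estimate ‖∫_0^t S(t−t')[(S(t')φ)(S(t')φ)_x] dt'‖_{H^s} ≤ C ‖φ‖_{H^s}² fails: there is no constant C such that it holds for all φ ∈ H^s(𝕋) and all t ∈ [0,T]. -/

import Mathlib

/-- The H^s(𝕋) norm, expressed through the Fourier coefficients. -/
noncomputable def hsNorm (s : ℝ) (f : ℤ → ℂ) : ℝ :=
  Real.sqrt (2 * Real.pi * ∑' k : ℤ, (1 + (k:ℝ) ^ 2) ^ s * ‖f k‖ ^ 2)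

/-- The Fourier symbol `e^{(iβk|k| − η(k²−|k|)) t}` of the Chen–Lee semigroup `S(t)`. -/
noncomputable def semigroupSymbol (β η t : ℝ) (k : ℤ) : ℂ :=
  Complex.exp ((Complex.I * (β * (k:ℝ) * |(k:ℝ)| : ℝ) -
    ((η * ((k:ℝ) ^ 2 - |(k:ℝ)|) : ℝ) : ℂ)) * (t : ℝ))

/-- The k-th Fourier coefficient of `∫_0^t S(t−t')[(S(t')φ)(S(t')φ)_x] dt'`, using
`[(S(t')φ)(S(t')φ)_x]^∧(k) = ∑_j (S(t')φ)^∧(j) · i(k−j) · (S(t')φ)^∧(k−j)`. -/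
noncomputable def bilinearTerm (β η : ℝ) (φ : ℤ → ℂ) (t : ℝ) (k : ℤ) : ℂ :=
  ∫ t' in Set.Ioo (0:ℝ) t,
    semigroupSymbol β η (t - t') k *
      ∑' j : ℤ, (semigroupSymbol β η t' j * φ j) *
        (Complex.I * ((k:ℝ) - (j:ℝ)) * (semigroupSymbol β η t' (k - j) * φ (k - j)))

noncomputable def Lsym (β η : ℝ) (k : ℤ) : ℂ :=
  Complex.I * (β * (k:ℝ) * |(k:ℝ)| : ℝ) - ((η * ((k:ℝ) ^ 2 - |(k:ℝ)|) : ℝ) : ℂ)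

lemma symbol_eq (β η t : ℝ) (k : ℤ) :
    semigroupSymbol β η t k = Complex.exp (Lsym β η k * t) := rfl

noncomputable def muC (β η M : ℝ) : ℂ :=
  Complex.I * ((2*β*(M-1) : ℝ) : ℂ) - ((2*η*(M-1)^2 : ℝ) : ℂ)

def phiN (N : ℤ) : ℤ → ℂ := fun k => if k = N ∨ k = 1 - N then 1 else 0

lemma L_one (β η : ℝ) : Lsym β η 1 = Complex.I * (β : ℂ) := by
  simp [Lsym]

lemma L_sum (β η : ℝ) (n : ℕ) (hn : 2 ≤ n) :
    Lsym β η (n:ℤ) + Lsym β η (1 - (n:ℤ)) = Complex.I * (β:ℂ) + muC β η (n:ℝ) := by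
  have h1 : ((( (n:ℤ) ):ℝ)) = (n:ℝ) := by push_cast; ring
  have h2 : (((1 - (n:ℤ)):ℤ):ℝ) = 1 - (n:ℝ) := by push_cast; ring
  have hM : (2:ℝ) ≤ (n:ℝ) := by exact_mod_cast hn
  have ha : |(n:ℝ)| = (n:ℝ) := abs_of_nonneg (by linarith)
  have hb : |1 - (n:ℝ)| = (n:ℝ) - 1 := by
    rw [abs_sub_comm, abs_of_nonneg (by linarith)]
  unfold Lsym muC
  rw [h1, h2, ha, hb]
  push_cast
  ring

lemma muC_re (β η M : ℝ) : (muC β η M).re = -(2*η*(M-1)^2) := by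
  simp only [muC, Complex.sub_re, Complex.mul_re, Complex.I_re, Complex.I_im,
    Complex.ofReal_re, Complex.ofReal_im]
  ring

lemma muC_ne (β η M : ℝ) (hη : 0 < η) (hM : 2 ≤ M) : muC β η M ≠ 0 := by
  intro h
  have h1 : (muC β η M).re = 0 := by rw [h]; simp
  rw [muC_re] at h1
  have h2 : (0:ℝ) < (M-1)^2 := by nlinarith
  nlinarith [mul_pos hη h2]

lemma phiN_self (N : ℤ) : phiN N N = 1 := by simp [phiN]

lemma phiN_other (N : ℤ) : phiN N (1 - N) = 1 := by simp [phiN]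

lemma phiN_zero (N j : ℤ) (h1 : j ≠ N) (h2 : j ≠ 1 - N) : phiN N j = 0 := by
  simp [phiN, h1, h2]

lemma tsum_one (β η : ℝ) (n : ℕ) (hn : 2 ≤ n) (t' : ℝ) :
    (∑' j : ℤ, (semigroupSymbol β η t' j * phiN (n:ℤ) j) *
        (Complex.I * (((1:ℤ):ℝ) - (j:ℝ)) *
          (semigroupSymbol β η t' (1 - j) * phiN (n:ℤ) (1 - j)))) =
      Complex.I * Complex.exp ((Lsym β η (n:ℤ) + Lsym β η (1 - (n:ℤ))) * t') := by
  have hNe : (n:ℤ) ≠ 1 - (n:ℤ) := by omega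
  rw [tsum_eq_sum (s := ({(n:ℤ), 1 - (n:ℤ)} : Finset ℤ)) ?_]
  · rw [Finset.sum_pair hNe]
    rw [show (1:ℤ) - (1 - (n:ℤ)) = (n:ℤ) by ring]
    rw [phiN_self, phiN_other]
    simp only [symbol_eq]
    rw [add_mul, Complex.exp_add]
    push_cast
    ring
  · intro j hj
    simp only [Finset.mem_insert, Finset.mem_singleton, not_or] at hj
    rw [phiN_zero _ _ hj.1 hj.2]
    ring

lemma b_one (β η T : ℝ) (hη : 0 < η) (hT : 0 < T) (n : ℕ) (hn : 2 ≤ n) :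
    bilinearTerm β η (phiN (n:ℤ)) T 1 =
      Complex.I * Complex.exp (Complex.I * (β:ℂ) * (T:ℂ)) *
        ((Complex.exp (muC β η (n:ℝ) * (T:ℂ)) - 1) / muC β η (n:ℝ)) := by
  have hM : (2:ℝ) ≤ (n:ℝ) := by exact_mod_cast hn
  have hμ : muC β η (n:ℝ) ≠ 0 := muC_ne β η (n:ℝ) hη hM
  have hfun : ∀ t' : ℝ,
      semigroupSymbol β η (T - t') 1 *
        (∑' j : ℤ, (semigroupSymbol β η t' j * phiN (n:ℤ) j) *
          (Complex.I * (((1:ℤ):ℝ) - (j:ℝ)) *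
            (semigroupSymbol β η t' (1 - j) * phiN (n:ℤ) (1 - j)))) =
      Complex.I * Complex.exp (Complex.I * (β:ℂ) * (T:ℂ)) *
        Complex.exp (muC β η (n:ℝ) * (t' : ℂ)) := by
    intro t'
    rw [tsum_one β η n hn t', symbol_eq, L_one, L_sum β η n hn]
    have hkey : Complex.exp (Complex.I * (β:ℂ) * ((T - t':ℝ):ℂ)) *
        Complex.exp ((Complex.I * (β:ℂ) + muC β η (n:ℝ)) * (t':ℂ)) =
        Complex.exp (Complex.I * (β:ℂ) * (T:ℂ)) *
          Complex.exp (muC β η (n:ℝ) * (t':ℂ)) := by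
      rw [← Complex.exp_add, ← Complex.exp_add]
      congr 1
      push_cast
      ring
    linear_combination Complex.I * hkey
  unfold bilinearTerm
  rw [MeasureTheory.integral_congr_ae (Filter.Eventually.of_forall fun t' => hfun t')]
  rw [MeasureTheory.integral_const_mul]
  congr 1
  rw [← MeasureTheory.integral_Ioc_eq_integral_Ioo, ← intervalIntegral.integral_of_le hT.le,
    integral_exp_mul_complex hμ]
  simp

lemma b_zero (β η T : ℝ) (n : ℕ) (k : ℤ) (hk1 : k ≠ 1) (hk2 : k ≠ 2*(n:ℤ))
    (hk3 : k ≠ 2 - 2*(n:ℤ)) : bilinearTerm β η (phiN (n:ℤ)) T k = 0 := by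
  unfold bilinearTerm
  have hts : ∀ t' : ℝ,
      (∑' j : ℤ, (semigroupSymbol β η t' j * phiN (n:ℤ) j) *
        (Complex.I * ((k:ℝ) - (j:ℝ)) *
          (semigroupSymbol β η t' (k - j) * phiN (n:ℤ) (k - j)))) = 0 := by
    intro t'
    have : ∀ j : ℤ, (semigroupSymbol β η t' j * phiN (n:ℤ) j) *
        (Complex.I * ((k:ℝ) - (j:ℝ)) *
          (semigroupSymbol β η t' (k - j) * phiN (n:ℤ) (k - j))) = 0 := by
      intro j
      by_cases hj : j = (n:ℤ) ∨ j = 1 - (n:ℤ)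
      · have h2 : phiN (n:ℤ) (k - j) = 0 := by
          apply phiN_zero
          · rcases hj with h | h <;> omega
          · rcases hj with h | h <;> omega
        rw [h2]; ring
      · push_neg at hj
        rw [phiN_zero _ _ hj.1 hj.2]; ring
    rw [funext this]
    exact tsum_zero
  simp only [hts, mul_zero]
  exact MeasureTheory.integral_zero _ _

lemma b_one_norm_lb (β η T : ℝ) (hβ : 0 < β) (hη : 0 < η) (hT : 0 < T)
    (n : ℕ) (hn : 2 ≤ n) :
    (1 - Real.exp (-(2*η*T))) / (2*(β+η)*(n:ℝ)^2) ≤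
      ‖bilinearTerm β η (phiN (n:ℤ)) T 1‖ := by
  have hM : (2:ℝ) ≤ (n:ℝ) := by exact_mod_cast hn
  set M := (n:ℝ)
  have hμne : muC β η M ≠ 0 := muC_ne β η M hη hM
  rw [b_one β η T hη hT n hn]
  rw [norm_mul, norm_mul, norm_div]
  have h1 : ‖Complex.I‖ = 1 := Complex.norm_I
  have h2 : ‖Complex.exp (Complex.I * (β:ℂ) * (T:ℂ))‖ = 1 := by
    rw [Complex.norm_exp]
    have : (Complex.I * (β:ℂ) * (T:ℂ)).re = 0 := by
      simp [Complex.mul_re]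
    rw [this, Real.exp_zero]
  rw [h1, h2, one_mul, one_mul]
  -- numerator bound
  have hre : (muC β η M * (T:ℂ)).re = -(2*η*(M-1)^2) * T := by
    rw [Complex.mul_re]
    simp [muC_re]
  have hnum : 1 - Real.exp (-(2*η*T)) ≤ ‖Complex.exp (muC β η M * (T:ℂ)) - 1‖ := by
    have hb : ‖Complex.exp (muC β η M * (T:ℂ))‖ = Real.exp (-(2*η*(M-1)^2) * T) := by
      rw [Complex.norm_exp, hre]
    have hc : Real.exp (-(2*η*(M-1)^2) * T) ≤ Real.exp (-(2*η*T)) := by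
      apply Real.exp_le_exp.mpr
      have h5 : (1:ℝ) ≤ (M-1)^2 := by nlinarith
      nlinarith [mul_pos hη hT, mul_le_mul_of_nonneg_right h5 hT.le]
    have hd : ‖(1:ℂ)‖ - ‖Complex.exp (muC β η M * (T:ℂ))‖ ≤
        ‖Complex.exp (muC β η M * (T:ℂ)) - 1‖ := by
      rw [norm_sub_rev]
      exact norm_sub_norm_le _ _
    rw [norm_one, hb] at hd
    linarith
  -- denominator bound
  have hden : ‖muC β η M‖ ≤ 2*(β+η)*M^2 := by
    have : ‖muC β η M‖ ≤ ‖Complex.I * ((2*β*(M-1):ℝ):ℂ)‖ + ‖((2*η*(M-1)^2:ℝ):ℂ)‖ :=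
      norm_sub_le _ _
    rw [norm_mul, Complex.norm_I, one_mul, Complex.norm_real, Complex.norm_real] at this
    rw [Real.norm_eq_abs, Real.norm_eq_abs, abs_of_nonneg (by nlinarith),
      abs_of_nonneg (by nlinarith)] at this
    nlinarith
  have hμpos : 0 < ‖muC β η M‖ := norm_pos_iff.mpr hμne
  exact div_le_div₀ (norm_nonneg _) hnum hμpos hden

lemma phi_summable (s : ℝ) (N : ℤ) :
    Summable fun k : ℤ => (1 + (k:ℝ) ^ 2) ^ s * ‖phiN N k‖ ^ 2 := by
  apply summable_of_ne_finset_zero (s := ({N, 1 - N} : Finset ℤ))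
  intro k hk
  simp only [Finset.mem_insert, Finset.mem_singleton, not_or] at hk
  rw [phiN_zero _ _ hk.1 hk.2]
  simp

lemma phi_tsum (s : ℝ) (n : ℕ) (hn : 2 ≤ n) :
    (∑' k : ℤ, (1 + (k:ℝ) ^ 2) ^ s * ‖phiN (n:ℤ) k‖ ^ 2) =
      (1 + (n:ℝ) ^ 2) ^ s + (1 + (1 - (n:ℝ)) ^ 2) ^ s := by
  rw [tsum_eq_sum (s := ({(n:ℤ), 1 - (n:ℤ)} : Finset ℤ)) ?_]
  · rw [Finset.sum_pair (by omega : (n:ℤ) ≠ 1 - (n:ℤ)), phiN_self, phiN_other]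
    push_cast
    simp
  · intro k hk
    simp only [Finset.mem_insert, Finset.mem_singleton, not_or] at hk
    rw [phiN_zero _ _ hk.1 hk.2]
    simp

lemma b_summable (s β η T : ℝ) (n : ℕ) :
    Summable fun k : ℤ => (1 + (k:ℝ) ^ 2) ^ s * ‖bilinearTerm β η (phiN (n:ℤ)) T k‖ ^ 2 := by
  apply summable_of_ne_finset_zero (s := ({1, 2*(n:ℤ), 2 - 2*(n:ℤ)} : Finset ℤ))
  intro k hk
  simp only [Finset.mem_insert, Finset.mem_singleton, not_or] at hk
  rw [b_zero β η T n k hk.1 hk.2.1 hk.2.2]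
  simp

/-- For s < −1, β, η > 0 and T > 0, the bilinear estimate
`‖∫_0^t S(t−t')[(S(t')φ)(S(t')φ)_x] dt'‖_{H^s} ≤ C ‖φ‖_{H^s}²` fails: there is no
constant C making it hold for all φ ∈ H^s(𝕋) and all t ∈ [0,T]. -/
theorem stmt15 (s β η T : ℝ) (hs : s < -1) (hβ : 0 < β) (hη : 0 < η) (hT : 0 < T) :
    ¬ ∃ C : ℝ, ∀ φ : ℤ → ℂ,
        (Summable fun k : ℤ => (1 + (k:ℝ) ^ 2) ^ s * ‖φ k‖ ^ 2) →
        ∀ t ∈ Set.Icc (0:ℝ) T,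
          hsNorm s (bilinearTerm β η φ t) ≤ C * (hsNorm s φ) ^ 2 := by
  rintro ⟨C, hC⟩
  set c0 : ℝ := 1 - Real.exp (-(2*η*T)) with hc0def
  have hc0 : 0 < c0 := by
    have : Real.exp (-(2*η*T)) < 1 := by
      rw [Real.exp_lt_one_iff]
      nlinarith
    linarith
  set A : ℝ := Real.sqrt (2 * Real.pi * 2 ^ s) with hAdef
  have hA : 0 < A := Real.sqrt_pos.mpr (by positivity)
  set K1 : ℝ := A * c0 / (2*(β+η)) with hK1def
  have hK1 : 0 < K1 := by positivity
  -- the key inequality for every n ≥ 2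
  have key : ∀ n : ℕ, 2 ≤ n →
      K1 ≤ C * (4 * Real.pi * (4:ℝ) ^ (-s)) * (n:ℝ) ^ (2*s+2) := by
    intro n hn
    have hM : (2:ℝ) ≤ (n:ℝ) := by exact_mod_cast hn
    have hM0 : (0:ℝ) < (n:ℝ) := by linarith
    set M := (n:ℝ)
    have hest := hC (phiN (n:ℤ)) (phi_summable s (n:ℤ)) T ⟨hT.le, le_refl T⟩
    -- norm of phi squared
    have hφsq : (hsNorm s (phiN (n:ℤ))) ^ 2 =
        2 * Real.pi * ((1 + M ^ 2) ^ s + (1 + (1 - M) ^ 2) ^ s) := by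
      rw [hsNorm, phi_tsum s n hn, Real.sq_sqrt (by positivity)]
    have hφub : (hsNorm s (phiN (n:ℤ))) ^ 2 ≤ 2 * Real.pi * (2 * (M^2/4) ^ s) := by
      rw [hφsq]
      have e1 : (1 + M ^ 2) ^ s ≤ (M^2/4) ^ s :=
        Real.rpow_le_rpow_of_nonpos (by positivity) (by nlinarith) (by linarith)
      have e2 : (1 + (1 - M) ^ 2) ^ s ≤ (M^2/4) ^ s :=
        Real.rpow_le_rpow_of_nonpos (by positivity) (by nlinarith) (by linarith)
      have hpi := Real.pi_pos
      nlinarith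
    -- lower bound on hsNorm of bilinear term
    have hblb : A * ‖bilinearTerm β η (phiN (n:ℤ)) T 1‖ ≤
        hsNorm s (bilinearTerm β η (phiN (n:ℤ)) T) := by
      have hterm : (2:ℝ) ^ s * ‖bilinearTerm β η (phiN (n:ℤ)) T 1‖ ^ 2 ≤
          ∑' k : ℤ, (1 + (k:ℝ) ^ 2) ^ s * ‖bilinearTerm β η (phiN (n:ℤ)) T k‖ ^ 2 := by
        have h := Summable.le_tsum (b_summable s β η T n) 1
          (fun k _ => by positivity)
        norm_num at h ⊢
        convert h using 2 <;> norm_num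
      rw [hsNorm, hAdef]
      rw [← Real.sqrt_sq (norm_nonneg (bilinearTerm β η (phiN (n:ℤ)) T 1)), ← Real.sqrt_mul (by positivity)]
      apply Real.sqrt_le_sqrt
      have hpi := Real.pi_pos
      nlinarith
    -- C ≥ 0
    have hφpos : (0:ℝ) < (hsNorm s (phiN (n:ℤ))) ^ 2 := by
      rw [hφsq]
      have := Real.pi_pos
      have h1 : (0:ℝ) < (1 + M ^ 2) ^ s := Real.rpow_pos_of_pos (by positivity) s
      have h2 : (0:ℝ) < (1 + (1 - M) ^ 2) ^ s := Real.rpow_pos_of_pos (by positivity) s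
      nlinarith
    have hCpos : 0 ≤ C := by
      by_contra hneg
      push_neg at hneg
      have h0 : 0 ≤ hsNorm s (bilinearTerm β η (phiN (n:ℤ)) T) := Real.sqrt_nonneg _
      nlinarith
    -- chain
    have hb1 := b_one_norm_lb β η T hβ hη hT n hn
    have chain : A * (c0 / (2*(β+η)*M^2)) ≤ C * (2 * Real.pi * (2 * (M^2/4) ^ s)) := by
      calc A * (c0 / (2*(β+η)*M^2)) ≤ A * ‖bilinearTerm β η (phiN (n:ℤ)) T 1‖ :=
            mul_le_mul_of_nonneg_left hb1 hA.le
        _ ≤ hsNorm s (bilinearTerm β η (phiN (n:ℤ)) T) := hblb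
        _ ≤ C * (hsNorm s (phiN (n:ℤ))) ^ 2 := hest
        _ ≤ C * (2 * Real.pi * (2 * (M^2/4) ^ s)) := mul_le_mul_of_nonneg_left hφub hCpos
    -- multiply through by M^2 and rewrite rpow's
    have hrw : (M^2/4) ^ s * M^2 = (4:ℝ) ^ (-s) * M ^ (2*s+2) := by
      rw [Real.div_rpow (by positivity) (by norm_num)]
      rw [← Real.rpow_natCast M 2, ← Real.rpow_mul hM0.le]
      rw [div_eq_mul_inv, ← Real.rpow_neg (by norm_num : (0:ℝ) ≤ 4)]
      rw [mul_assoc, mul_comm ((4:ℝ) ^ (-s)) (M ^ ((2:ℕ):ℝ)), ← mul_assoc, ← Real.rpow_add hM0]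
      push_cast
      ring_nf
    have hM2 : (0:ℝ) < M^2 := by positivity
    have lhs_eq : A * (c0/(2*(β+η)*M^2)) * M^2 = K1 := by
      rw [hK1def]
      field_simp
    have rhs_eq : C * (2*Real.pi*(2*(M^2/4)^s)) * M^2 =
        C * (4 * Real.pi * (4:ℝ) ^ (-s)) * M ^ (2*s+2) := by
      rw [show C * (2*Real.pi*(2*(M^2/4)^s)) * M^2 =
        C*(4*Real.pi)*((M^2/4)^s*M^2) by ring, hrw]
      ring
    calc K1 = A * (c0/(2*(β+η)*M^2)) * M^2 := lhs_eq.symm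
      _ ≤ C * (2*Real.pi*(2*(M^2/4)^s)) * M^2 :=
          mul_le_mul_of_nonneg_right chain hM2.le
      _ = C * (4 * Real.pi * (4:ℝ) ^ (-s)) * M ^ (2*s+2) := rhs_eq
  -- contradiction by letting n → ∞
  have ht1 : Filter.Tendsto (fun x : ℝ => x ^ (2*s+2)) Filter.atTop (nhds 0) := by
    have h := tendsto_rpow_neg_atTop (show (0:ℝ) < -(2*s+2) by linarith)
    simpa [neg_neg] using h
  have ht2 : Filter.Tendsto
      (fun n : ℕ => C * (4 * Real.pi * (4:ℝ) ^ (-s)) * (n:ℝ) ^ (2*s+2))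
      Filter.atTop (nhds 0) := by
    have h := (ht1.comp (tendsto_natCast_atTop_atTop :
        Filter.Tendsto (fun n : ℕ => (n:ℝ)) Filter.atTop Filter.atTop)).const_mul
      (C * (4 * Real.pi * (4:ℝ) ^ (-s)))
    simpa using h
  have hev : ∀ᶠ n : ℕ in Filter.atTop,
      C * (4 * Real.pi * (4:ℝ) ^ (-s)) * (n:ℝ) ^ (2*s+2) < K1 :=
    ht2.eventually_lt_const hK1
  obtain ⟨n, hn2, hlt⟩ := ((Filter.eventually_ge_atTop 2).and hev).exists
  exact absurd (key n hn2) (not_le.mpr hlt)
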